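/- For every ε > 0 and every z ∈ ℂ\{0}, w ∈ ℂ (writing z = z₁ + iz₂, w = w₁ + iw₂), the Levi-Civita transformed Stark Hamiltonian separates: |z|² · ( H_ε(z²/2, w/z̄) + 1/2 ) = ( w₁²/2 + z₁²/2 + εz₁⁴/2 ) + ( w₂²/2 + z₂²/2 - εz₂⁴/2 ) - 2, where z̄ is the complex conjugate of z and ℂ is identified with ℝ² via z₁ + iz₂ ↦ (z₁, z₂). -/

import Mathlib

/-- The Hamiltonian of the planar Stark problem with field strength `ε`, in complex notation
(identifying `ℝ²` with `ℂ` via `(q₁,q₂) ↦ q₁ + iq₂`):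
`H_ε(q,p) = |p|²/2 - 1/|q| + ε Re q`, defined for `q ∈ ℂ \ {0}`. -/
noncomputable def starkHamiltonian (ε : ℝ) (q p : ℂ) : ℝ :=
  ‖p‖ ^ 2 / 2 - 1 / ‖q‖ + ε * q.re

/-- For every `ε > 0`, `z ≠ 0` and `w`, the Levi-Civita transformed Stark Hamiltonian
separates: `|z|²(H_ε(z²/2, w/z̄) + 1/2)
= (w₁²/2 + z₁²/2 + εz₁⁴/2) + (w₂²/2 + z₂²/2 - εz₂⁴/2) - 2`. -/
theorem levi_civita_separates_stark (ε : ℝ) (hε : 0 < ε) (z w : ℂ) (hz : z ≠ 0) :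
    ‖z‖ ^ 2 *
        (starkHamiltonian ε (z ^ 2 / 2) (w / (starRingEnd ℂ z)) + 1 / 2) =
      (w.re ^ 2 / 2 + z.re ^ 2 / 2 + ε * z.re ^ 4 / 2) +
        (w.im ^ 2 / 2 + z.im ^ 2 / 2 - ε * z.im ^ 4 / 2) - 2 := by
  have habs : ‖z‖ ^ 2 = z.re ^ 2 + z.im ^ 2 := by
    rw [Complex.sq_norm, Complex.normSq_apply]; ring
  have habsne : ‖z‖ ≠ 0 := by simpa using hz
  have habs2 : ‖z‖ ^ 2 > 0 := by positivity
  simp only [starkHamiltonian, map_div₀, map_pow, norm_div, norm_pow, Complex.norm_conj,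
    Complex.div_re, Complex.sq_norm]
  rw [div_pow, Complex.sq_norm, Complex.sq_norm]
  have hns : Complex.normSq z ≠ 0 := by simpa using hz
  have hw : Complex.normSq w = w.re ^ 2 + w.im ^ 2 := by
    rw [Complex.normSq_apply]; ring
  have hre : (z ^ 2).re = z.re ^ 2 - z.im ^ 2 := by
    simp [pow_two, Complex.mul_re]
  rw [Complex.sq_norm] at habs
  field_simp
  rw [hre, hw, habs]
  simp only [Complex.normSq_apply, Complex.re_ofNat, Complex.im_ofNat, Complex.norm_ofNat]
  ring
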